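/- Let f, g ∈ L²(ℝ^d, dx) be square-integrable probability density functions with ∫ f·g dx > 0, and let P be the orthogonal projection of L²(ℝ^d) onto a closed subspace. Then the Cauchy–Schwarz P-divergence 𝓓iv(f, g|P) := −log( (∫ f(x)g(x) dx) / D(f, g|P) ) satisfies 𝓓iv(f, g|I) − 𝓓iv(f, g|P) = −log( D(f, g|P) / (‖f‖·‖g‖) ) ≥ 0, and hence 𝓓iv(f, g|I) ≥ 𝓓iv(f, g|P) ≥ 0; moreover 𝓓iv(f, f|P) = 0. -/

import Mathlib

open MeasureTheory
open scoped RealInnerProductSpace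

/-- The real Hilbert space `L²(ℝ^d, dx)`. -/
abbrev L2Euclidean (d : ℕ) : Type :=
  Lp ℝ 2 (volume : Measure (EuclideanSpace ℝ (Fin d)))

/-- **Cauchy–Schwarz P-divergence.** Let `f, g ∈ L²(ℝ^d)` be square-integrable
probability densities with `∫ f g > 0`, and `P` the orthogonal projection onto a
closed subspace `V` of `L²(ℝ^d)`. With `D(f,g|P) = ‖Pf‖ ‖Pg‖ + ‖f − Pf‖ ‖g − Pg‖`
and `𝓓iv(f,g|P) = −log(⟨f,g⟩ / D(f,g|P))`, one has
`𝓓iv(f,g|I) − 𝓓iv(f,g|P) = −log(D(f,g|P)/(‖f‖ ‖g‖)) ≥ 0`, hence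
`𝓓iv(f,g|I) ≥ 𝓓iv(f,g|P) ≥ 0`; moreover `𝓓iv(f,f|P) = 0`. -/
lemma csR2_aux (a1 b1 a2 b2 F G : ℝ)
    (hF : F * F = a1 * a1 + b1 * b1) (hG : G * G = a2 * a2 + b2 * b2)
    (hFG : 0 < F * G) : a1 * a2 + b1 * b2 ≤ F * G := by
  nlinarith [sq_nonneg (a1 * G - F * a2), sq_nonneg (b1 * G - F * b2)]

theorem cauchy_schwarz_P_divergence {d : ℕ} (f g : L2Euclidean d)
    (hf_nonneg : 0 ≤ᵐ[volume] ⇑f) (hf_one : ∫ a, f a = 1)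
    (hg_nonneg : 0 ≤ᵐ[volume] ⇑g) (hg_one : ∫ a, g a = 1)
    (hfg : 0 < ⟪f, g⟫)
    (V : Submodule ℝ (L2Euclidean d)) [V.HasOrthogonalProjection]
    (Dfg Dff DivP DivI DivPff : ℝ)
    (hDfg : Dfg = ‖(V.orthogonalProjectionOnto f : L2Euclidean d)‖
          * ‖(V.orthogonalProjectionOnto g : L2Euclidean d)‖
        + ‖f - (V.orthogonalProjectionOnto f : L2Euclidean d)‖
          * ‖g - (V.orthogonalProjectionOnto g : L2Euclidean d)‖)
    (hDff : Dff = ‖(V.orthogonalProjectionOnto f : L2Euclidean d)‖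
          * ‖(V.orthogonalProjectionOnto f : L2Euclidean d)‖
        + ‖f - (V.orthogonalProjectionOnto f : L2Euclidean d)‖
          * ‖f - (V.orthogonalProjectionOnto f : L2Euclidean d)‖)
    (hDivP : DivP = -Real.log (⟪f, g⟫ / Dfg))
    (hDivI : DivI = -Real.log (⟪f, g⟫ / (‖f‖ * ‖g‖)))
    (hDivPff : DivPff = -Real.log (⟪f, f⟫ / Dff)) :
    DivI - DivP = -Real.log (Dfg / (‖f‖ * ‖g‖)) ∧
    0 ≤ -Real.log (Dfg / (‖f‖ * ‖g‖)) ∧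
    DivP ≤ DivI ∧ 0 ≤ DivP ∧ DivPff = 0 := by
  classical
  set Pf := (V.orthogonalProjectionOnto f : L2Euclidean d) with hPfdef
  set Pg := (V.orthogonalProjectionOnto g : L2Euclidean d) with hPgdef
  have hoPf : f - Pf ∈ Vᗮ := Submodule.sub_starProjection_mem_orthogonal f
  have hoPg : g - Pg ∈ Vᗮ := Submodule.sub_starProjection_mem_orthogonal g
  have hPfV : Pf ∈ V := (V.orthogonalProjectionOnto f).2
  have hPgV : Pg ∈ V := (V.orthogonalProjectionOnto g).2
  have h1 : ⟪Pf, g - Pg⟫ = 0 := hoPg Pf hPfV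
  have h2 : ⟪f - Pf, Pg⟫ = 0 := by
    rw [real_inner_comm]; exact hoPf Pg hPgV
  have h3 : ⟪f - Pf, f - Pf⟫ = ‖f - Pf‖ * ‖f - Pf‖ := real_inner_self_eq_norm_mul_norm _
  -- decomposition of inner product
  have hfsum : Pf + (f - Pf) = f := by abel
  have hgsum : Pg + (g - Pg) = g := by abel
  have hdec : ⟪f, g⟫ = ⟪Pf, Pg⟫ + ⟪f - Pf, g - Pg⟫ := by
    have : ⟪Pf + (f - Pf), Pg + (g - Pg)⟫ = ⟪Pf, Pg⟫ + ⟪f - Pf, g - Pg⟫ := by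
      simp only [inner_add_left, inner_add_right, h1, h2]; ring
    rwa [hfsum, hgsum] at this
  have hdecf : ⟪f, f⟫ = ⟪Pf, Pf⟫ + ⟪f - Pf, f - Pf⟫ := by
    have : ⟪Pf + (f - Pf), Pf + (f - Pf)⟫ = ⟪Pf, Pf⟫ + ⟪f - Pf, f - Pf⟫ := by
      have h1' : ⟪Pf, f - Pf⟫ = 0 := hoPf Pf hPfV
      have h2' : ⟪f - Pf, Pf⟫ = 0 := by rw [real_inner_comm]; exact h1'
      simp only [inner_add_left, inner_add_right, h1', h2']; ring
    rwa [hfsum] at this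
  -- Pythagoras
  have hpythf : ‖f‖ * ‖f‖ = ‖Pf‖ * ‖Pf‖ + ‖f - Pf‖ * ‖f - Pf‖ := by
    have := hdecf
    rw [real_inner_self_eq_norm_mul_norm, real_inner_self_eq_norm_mul_norm,
      real_inner_self_eq_norm_mul_norm] at this
    exact this
  have hpythg : ‖g‖ * ‖g‖ = ‖Pg‖ * ‖Pg‖ + ‖g - Pg‖ * ‖g - Pg‖ := by
    have hdecg : ⟪g, g⟫ = ⟪Pg, Pg⟫ + ⟪g - Pg, g - Pg⟫ := by
      have : ⟪Pg + (g - Pg), Pg + (g - Pg)⟫ = ⟪Pg, Pg⟫ + ⟪g - Pg, g - Pg⟫ := by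
        have h1' : ⟪Pg, g - Pg⟫ = 0 := hoPg Pg hPgV
        have h2' : ⟪g - Pg, Pg⟫ = 0 := by rw [real_inner_comm]; exact h1'
        simp only [inner_add_left, inner_add_right, h1', h2']; ring
      rwa [hgsum] at this
    rw [real_inner_self_eq_norm_mul_norm, real_inner_self_eq_norm_mul_norm,
      real_inner_self_eq_norm_mul_norm] at hdecg
    exact hdecg
  -- inner ≤ Dfg
  have hle : ⟪f, g⟫ ≤ Dfg := by
    rw [hdec, hDfg]
    exact add_le_add (real_inner_le_norm _ _) (real_inner_le_norm _ _)
  have hDfg_pos : 0 < Dfg := lt_of_lt_of_le hfg hle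
  -- Dfg ≤ ‖f‖‖g‖
  have hFG_pos : 0 < ‖f‖ * ‖g‖ :=
    lt_of_lt_of_le hfg (real_inner_le_norm f g)
  have hDfg_le : Dfg ≤ ‖f‖ * ‖g‖ := by
    rw [hDfg]
    exact csR2_aux ‖Pf‖ ‖f - Pf‖ ‖Pg‖ ‖g - Pg‖ ‖f‖ ‖g‖ hpythf hpythg hFG_pos
  have hfgne : ⟪f, g⟫ ≠ 0 := ne_of_gt hfg
  -- part 1
  have part1 : DivI - DivP = -Real.log (Dfg / (‖f‖ * ‖g‖)) := by
    rw [hDivI, hDivP, Real.log_div hfgne (ne_of_gt hFG_pos),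
      Real.log_div hfgne (ne_of_gt hDfg_pos),
      Real.log_div (ne_of_gt hDfg_pos) (ne_of_gt hFG_pos)]
    ring
  have part2 : 0 ≤ -Real.log (Dfg / (‖f‖ * ‖g‖)) := by
    have : Real.log (Dfg / (‖f‖ * ‖g‖)) ≤ 0 :=
      Real.log_nonpos (by positivity) ((div_le_one hFG_pos).mpr hDfg_le)
    linarith
  have part4 : 0 ≤ DivP := by
    rw [hDivP]
    have : Real.log (⟪f, g⟫ / Dfg) ≤ 0 :=
      Real.log_nonpos (by positivity) ((div_le_one hDfg_pos).mpr hle)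
    linarith
  have part5 : DivPff = 0 := by
    have hDff_eq : Dff = ⟪f, f⟫ := by
      rw [hDff, hdecf, real_inner_self_eq_norm_mul_norm, real_inner_self_eq_norm_mul_norm]
    have hf_pos : (0:ℝ) < ⟪f, f⟫ := by
      rw [real_inner_self_eq_norm_mul_norm]
      have : (0:ℝ) < ‖f‖ := by
        by_contra h
        push_neg at h
        have : ‖f‖ = 0 := le_antisymm h (norm_nonneg _)
        rw [this] at hFG_pos; simp at hFG_pos
      positivity
    rw [hDivPff, hDff_eq, div_self (ne_of_gt hf_pos), Real.log_one, neg_zero]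
  exact ⟨part1, part2, by linarith, part4, part5⟩
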